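/- Consider the data set with N = 2 consumers, K = 4 goods and T = 4 observations in which both consumers have identical expenditure allocations e^{i,1} = (10,1,1,1), e^{i,2} = (1,10,1,1), e^{i,3} = (1,1,10,1), e^{i,4} = (1,1,1,10), and the price indices are p̄^1 = (2,1,1,1), p̄^2 = (1,2,1,1), p̄^3 = (1,1,2,1), p̄^4 = (1,1,1,2). Then there do NOT exist positive prices p^{i,t}_1 > 0 for i = 1,2 and t = 1,…,4 with (p^{1,t}_1 + p^{2,t}_1)/2 = p̄^t_1 for every t, together with strictly increasing, continuous utility functions u^1, u^2: ℝ^4_+ → ℝ, such that for each (i,t), u^i(x(e^{i,t}, p^{i,t})) ≥ u^i(x) for all x ∈ B(p^{i,t}, m^{i,t}), where p^{i,t} = (p^{i,t}_1, p̄^t_2, p̄^t_3, p̄^t_4). That is, this data set cannot be rationalized, even with heterogenous preferences, by price heterogeneity in good 1 alone when prices are aggregated by the arithmetic average. -/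
import Mathlib


open Filter Set MeasureTheory

noncomputable section

/-- The inner product `p·x = ∑ k, p k * x k`. -/
def dotp {K : ℕ} (p x : Fin K → ℝ) : ℝ := ∑ k, p k * x k

/-- The implied bundle `x(e,p) = (e_k / p_k)_k`. -/
def demandOf {K : ℕ} (e p : Fin K → ℝ) : Fin K → ℝ := fun k => e k / p k

/-- The budget set `B(p,m) = {x ∈ ℝ^K_+ : p·x ≤ m}`. -/
def budget {K : ℕ} (p : Fin K → ℝ) (m : ℝ) : Set (Fin K → ℝ) :=
  {x | (∀ k, 0 ≤ x k) ∧ dotp p x ≤ m}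

/-- A utility function on `ℝ^K_+`: continuous and strictly increasing. -/
def IsUtility {K : ℕ} (u : (Fin K → ℝ) → ℝ) : Prop :=
  ContinuousOn u {x | ∀ k, 0 ≤ x k} ∧
  ∀ x y : Fin K → ℝ, (∀ k, 0 ≤ x k) → (∀ k, 0 ≤ y k) →
    (∀ k, x k ≤ y k) → (∃ k, x k < y k) → u x < u y

/-- Basic data-set conditions: expenditures are nonnegative with positive total,
and price indices are strictly positive. -/
def IsDataset {N T K : ℕ} (e : Fin N → Fin T → Fin K → ℝ)
    (pbar : Fin T → Fin K → ℝ) : Prop :=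
  (∀ i t k, 0 ≤ e i t k) ∧ (∀ i t, 0 < ∑ k, e i t k) ∧ (∀ t k, 0 < pbar t k)

/-- The expenditure allocations of the example: both consumers spend 10 on good `t`
and 1 on every other good at observation `t`. -/
def eEx : Fin 2 → Fin 4 → Fin 4 → ℝ := fun _ t k => if t = k then 10 else 1

/-- The price indices of the example: good `t` has price 2 at observation `t`,
all other prices are 1. -/
def pbarEx : Fin 4 → Fin 4 → ℝ := fun t k => if t = k then 2 else 1

/-- Consumer `i`'s full price vector at observation `t`, with idiosyncratic price
`p1 i t` for good 1 and the price indices for all other goods. -/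
def pEx (p1 : Fin 2 → Fin 4 → ℝ) (i : Fin 2) (t : Fin 4) : Fin 4 → ℝ :=
  fun k => if k = 0 then p1 i t else pbarEx t k

lemma sum_eEx (i : Fin 2) (t : Fin 4) : ∑ k, eEx i t k = 13 := by
  fin_cases t <;> simp [eEx, Fin.sum_univ_four] <;> norm_num

lemma eEx_nonneg (i : Fin 2) (t : Fin 4) (k : Fin 4) : 0 ≤ eEx i t k := by
  unfold eEx; split <;> norm_num

lemma pEx_pos (p1 : Fin 2 → Fin 4 → ℝ) (i : Fin 2) (t : Fin 4)
    (h : 0 < p1 i t) (k : Fin 4) : 0 < pEx p1 i t k := by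
  unfold pEx pbarEx
  split
  · exact h
  · split <;> norm_num

lemma comp_dotp (p1 : Fin 2 → Fin 4 → ℝ) (i : Fin 2) (t s : Fin 4)
    (ht : t ≠ 0) (hs : s ≠ 0) (hts : t ≠ s) (hps : p1 i s ≠ 0) :
    dotp (pEx p1 i t) (demandOf (eEx i s) (pEx p1 i s)) = p1 i t / p1 i s + 8 := by
  fin_cases t <;> fin_cases s <;>
    simp_all [dotp, demandOf, pEx, eEx, pbarEx, Fin.sum_univ_four] <;>
    (rw [div_eq_mul_inv]; ring)

lemma key (p1 : Fin 2 → Fin 4 → ℝ) (u : Fin 2 → (Fin 4 → ℝ) → ℝ)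
    (hp : ∀ i t, 0 < p1 i t) (hu : ∀ i, IsUtility (u i))
    (hopt : ∀ (i : Fin 2) (t : Fin 4),
      ∀ x ∈ budget (pEx p1 i t) (∑ k, eEx i t k),
        u i x ≤ u i (demandOf (eEx i t) (pEx p1 i t)))
    (i : Fin 2) (t s : Fin 4)
    (h1 : dotp (pEx p1 i t) (demandOf (eEx i s) (pEx p1 i s)) < 13)
    (h2 : dotp (pEx p1 i s) (demandOf (eEx i t) (pEx p1 i t)) ≤ 13) : False := by
  set xs := demandOf (eEx i s) (pEx p1 i s) with hxsdef
  set xt := demandOf (eEx i t) (pEx p1 i t) with hxtdef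
  have hxs : ∀ k, 0 ≤ xs k := fun k =>
    div_nonneg (eEx_nonneg i s k) (pEx_pos p1 i s (hp i s) k).le
  have hxt : ∀ k, 0 ≤ xt k := fun k =>
    div_nonneg (eEx_nonneg i t k) (pEx_pos p1 i t (hp i t) k).le
  have hp0 : 0 < pEx p1 i t 0 := pEx_pos p1 i t (hp i t) 0
  set ε : ℝ := (13 - dotp (pEx p1 i t) xs) / pEx p1 i t 0 with hεdef
  have hε : 0 < ε := div_pos (by linarith) hp0
  set y : Fin 4 → ℝ := fun k => if k = 0 then xs 0 + ε else xs k with hydef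
  have hdy : dotp (pEx p1 i t) y = 13 := by
    have : dotp (pEx p1 i t) y = dotp (pEx p1 i t) xs + pEx p1 i t 0 * ε := by
      simp [dotp, Fin.sum_univ_four, hydef]; ring
    rw [this, hεdef, mul_div_cancel₀ _ (ne_of_gt hp0)]; ring
  have hymem : y ∈ budget (pEx p1 i t) (∑ k, eEx i t k) := by
    refine ⟨fun k => ?_, by rw [sum_eEx, hdy]⟩
    simp only [hydef]
    split
    · have := hxs 0; linarith
    · exact hxs k
  have h3 : u i y ≤ u i xt := hopt i t y hymem
  have h4 : u i xs < u i y := by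
    refine (hu i).2 xs y hxs hymem.1 (fun k => ?_) ⟨0, ?_⟩
    · show xs k ≤ if k = 0 then xs 0 + ε else xs k
      split
      · rename_i hk; subst hk; linarith
      · exact le_refl _
    · show xs 0 < if (0:Fin 4) = 0 then xs 0 + ε else xs 0
      norm_num; linarith
  have h5 : u i xt ≤ u i xs := hopt i s xt ⟨hxt, by rw [sum_eEx]; exact h2⟩
  linarith

lemma pairlem (p1 : Fin 2 → Fin 4 → ℝ) (u : Fin 2 → (Fin 4 → ℝ) → ℝ)
    (hp : ∀ i t, 0 < p1 i t) (hu : ∀ i, IsUtility (u i))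
    (hopt : ∀ (i : Fin 2) (t : Fin 4),
      ∀ x ∈ budget (pEx p1 i t) (∑ k, eEx i t k),
        u i x ≤ u i (demandOf (eEx i t) (pEx p1 i t)))
    (i : Fin 2) (t s : Fin 4) (ht : t ≠ 0) (hs : s ≠ 0) (hts : t ≠ s)
    (hle : p1 i t ≤ p1 i s) : 5 * p1 i t < p1 i s := by
  by_contra hcon
  push_neg at hcon
  have hpt := hp i t
  have hps := hp i s
  refine key p1 u hp hu hopt i t s ?_ ?_
  · rw [comp_dotp p1 i t s ht hs hts (ne_of_gt hps)]
    have : p1 i t / p1 i s ≤ 1 := (div_le_one hps).2 hle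
    linarith
  · rw [comp_dotp p1 i s t hs ht hts.symm (ne_of_gt hpt)]
    have : p1 i s / p1 i t ≤ 5 := (div_le_iff₀ hpt).2 (by linarith)
    linarith

/-- the example data set cannot be rationalized, even with
heterogenous preferences, by price heterogeneity in good 1 alone when the
idiosyncratic prices average (arithmetically) to the observed price indices. -/
theorem example_not_rationalizable_one_good :
    ¬ ∃ (p1 : Fin 2 → Fin 4 → ℝ) (u : Fin 2 → (Fin 4 → ℝ) → ℝ),
        (∀ i t, 0 < p1 i t) ∧
        (∀ t, (p1 0 t + p1 1 t) / 2 = pbarEx t 0) ∧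
        (∀ i, IsUtility (u i)) ∧
        (∀ (i : Fin 2) (t : Fin 4),
          ∀ x ∈ budget (pEx p1 i t) (∑ k, eEx i t k),
            u i x ≤ u i (demandOf (eEx i t) (pEx p1 i t))) := by
  rintro ⟨p1, u, hp, havg, hu, hopt⟩
  have hsum : ∀ t : Fin 4, t ≠ 0 → p1 0 t + p1 1 t = 2 := by
    intro t ht
    have h := havg t
    rw [pbarEx, if_neg ht] at h
    linarith
  obtain ⟨t, s, r, ht, hs, hr, hts, hsr, htr, h1, h2⟩ :
      ∃ t s r : Fin 4, t ≠ 0 ∧ s ≠ 0 ∧ r ≠ 0 ∧ t ≠ s ∧ s ≠ r ∧ t ≠ r ∧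
        p1 0 t ≤ p1 0 s ∧ p1 0 s ≤ p1 0 r := by
    rcases le_total (p1 0 1) (p1 0 2) with h12 | h21 <;>
      rcases le_total (p1 0 2) (p1 0 3) with h23 | h32 <;>
      rcases le_total (p1 0 1) (p1 0 3) with h13 | h31
    · exact ⟨1, 2, 3, by decide, by decide, by decide, by decide, by decide, by decide, h12, h23⟩
    · exact ⟨1, 2, 3, by decide, by decide, by decide, by decide, by decide, by decide, h12, h23⟩
    · exact ⟨1, 3, 2, by decide, by decide, by decide, by decide, by decide, by decide, h13, h32⟩
    · exact ⟨3, 1, 2, by decide, by decide, by decide, by decide, by decide, by decide, h31, h12⟩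
    · exact ⟨2, 1, 3, by decide, by decide, by decide, by decide, by decide, by decide, h21, h13⟩
    · exact ⟨2, 3, 1, by decide, by decide, by decide, by decide, by decide, by decide, h23, h31⟩
    · exact ⟨3, 2, 1, by decide, by decide, by decide, by decide, by decide, by decide, h32, h21⟩
    · exact ⟨3, 2, 1, by decide, by decide, by decide, by decide, by decide, by decide, h32, h21⟩
  have A : 5 * p1 0 s < p1 0 r := pairlem p1 u hp hu hopt 0 s r hs hr hsr h2
  have hd : p1 1 s ≤ p1 1 t := by
    have e1 := hsum t ht
    have e2 := hsum s hs
    linarith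
  have B : 5 * p1 1 s < p1 1 t := pairlem p1 u hp hu hopt 1 s t hs ht hts.symm hd
  have e1 := hsum t ht
  have e2 := hsum s hs
  have e3 := hsum r hr
  have := hp 1 r
  have := hp 0 t
  linarith
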